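/- arXiv:1509.04167 — 2 statements merged into one kernel-verified Lean document; each statement's English description precedes it below -/
import Mathlib

section
/- Let k ≥ 1 be an integer and m₁, m₂ ∈ ℕ with m₁ + m₂ ≤ k. Then (2m₁ + m₂)! ≤ ((2k)!)^{m₁/k} · ((2k−1)!)^{m₂/(2k)}, where the powers are real powers. Moreover, equality holds when k = 1. -/
/-- `(n+1)! ≤ (n+2)^n`. -/
lemma aux_fact_le_pow (n : ℕ) : (n + 1).factorial ≤ (n + 2) ^ n := by
  induction n with
  | zero => simp [Nat.factorial]
  | succ n ih =>
    have h1 : (n + 2).factorial = (n + 2) * (n + 1).factorial := rfl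
    calc (n + 2).factorial = (n + 2) * (n + 1).factorial := h1
      _ ≤ (n + 2) * (n + 2) ^ n := Nat.mul_le_mul_left _ ih
      _ = (n + 2) ^ (n + 1) := by rw [pow_succ]; ring
      _ ≤ (n + 3) ^ (n + 1) := Nat.pow_le_pow_left (by omega) _

/-- `(n+1)^d * n! ≤ (n+d)!`. -/
lemma aux_pow_mul_fact_le (n d : ℕ) : (n + 1) ^ d * n.factorial ≤ (n + d).factorial := by
  induction d with
  | zero => simp
  | succ d ih =>
    calc (n + 1) ^ (d + 1) * n.factorial
        = (n + 1) * ((n + 1) ^ d * n.factorial) := by ring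
      _ ≤ (n + 1) * (n + d).factorial := Nat.mul_le_mul_left _ ih
      _ ≤ (n + d + 1) * (n + d).factorial := Nat.mul_le_mul_right _ (by omega)
      _ = (n + d + 1).factorial := (Nat.factorial_succ _).symm

/-- Core inequality: if `m ≤ n` and `n + m ≤ N` then `(n!)^N * N^m ≤ (N!)^n`. -/
lemma aux_core (n N m : ℕ) (hm : m ≤ n) (hnm : n + m ≤ N) :
    n.factorial ^ N * N ^ m ≤ N.factorial ^ n := by
  rcases Nat.eq_zero_or_pos n with hn | hn
  · subst hn
    have : m = 0 := Nat.le_zero.mp hm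
    subst this
    simp
  obtain ⟨n', rfl⟩ : ∃ n', n = n' + 1 := ⟨n - 1, by omega⟩
  set n := n' + 1 with hn'
  have hnN : n ≤ N := by omega
  rcases eq_or_lt_of_le hnN with hEq | hLt
  · have hm0 : m = 0 := by omega
    subst hm0
    rw [← hEq]
    simp
  obtain ⟨d, rfl⟩ : ∃ d, N = n + d + 1 := ⟨N - n - 1, by omega⟩
  set N := n + d + 1 with hN'
  obtain ⟨c, hc⟩ : ∃ c, m + c = d + 1 := ⟨d + 1 - m, by omega⟩
  obtain ⟨e, he⟩ : ∃ e, m + e = n := ⟨n - m, by omega⟩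
  -- step 1 : (n+1)^d * N * n! ≤ N!
  have h1 : (n + 1) ^ d * N * n.factorial ≤ N.factorial := by
    calc (n + 1) ^ d * N * n.factorial
        = N * ((n + 1) ^ d * n.factorial) := by ring
      _ ≤ N * (n + d).factorial := Nat.mul_le_mul_left _ (aux_pow_mul_fact_le n d)
      _ = N.factorial := (Nat.factorial_succ _).symm
  have h2 : ((n + 1) ^ d * N * n.factorial) ^ n ≤ N.factorial ^ n :=
    Nat.pow_le_pow_left h1 n
  -- inner inequality : n!^(d+1) * N^m ≤ (n+1)^(d*n) * N^n
  have hfl : n.factorial ≤ (n + 1) ^ n' := aux_fact_le_pow n'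
  have hexp : n' * (d + 1) + c = d * n + e := by
    have h5 : n' + c = d + e := by omega
    have : n' * (d + 1) = n' * d + n' := by ring
    have : d * n = n' * d + d := by rw [hn']; ring
    omega
  have hinner : n.factorial ^ (d + 1) * N ^ m ≤ (n + 1) ^ (d * n) * N ^ n := by
    calc n.factorial ^ (d + 1) * N ^ m
        ≤ ((n + 1) ^ n') ^ (d + 1) * N ^ m :=
          Nat.mul_le_mul_right _ (Nat.pow_le_pow_left hfl _)
      _ = (n + 1) ^ (n' * (d + 1)) * N ^ m := by rw [← pow_mul]
      _ ≤ (n + 1) ^ (n' * (d + 1) + c) * N ^ m :=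
          Nat.mul_le_mul_right _ (Nat.pow_le_pow_right (by omega) (by omega))
      _ = (n + 1) ^ (d * n + e) * N ^ m := by rw [hexp]
      _ = (n + 1) ^ (d * n) * ((n + 1) ^ e * N ^ m) := by rw [pow_add]; ring
      _ ≤ (n + 1) ^ (d * n) * (N ^ e * N ^ m) := by
          exact Nat.mul_le_mul_left _
            (Nat.mul_le_mul_right _ (Nat.pow_le_pow_left (by omega) _))
      _ = (n + 1) ^ (d * n) * N ^ n := by rw [← pow_add, Nat.add_comm e m, he]
  calc n.factorial ^ N * N ^ m
      = n.factorial ^ n * (n.factorial ^ (d + 1) * N ^ m) := by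
        rw [hN', show n + d + 1 = n + (d + 1) from rfl, pow_add]; ring
    _ ≤ n.factorial ^ n * ((n + 1) ^ (d * n) * N ^ n) :=
        Nat.mul_le_mul_left _ hinner
    _ = ((n + 1) ^ d * N * n.factorial) ^ n := by
        rw [mul_pow, mul_pow, ← pow_mul]; ring
    _ ≤ N.factorial ^ n := h2

/-- Key natural-number inequality. -/
lemma aux_key (k m₁ m₂ : ℕ) (hk : 1 ≤ k) (h : m₁ + m₂ ≤ k) :
    ((2 * m₁ + m₂).factorial) ^ (2 * k) ≤
      ((2 * k).factorial) ^ (2 * m₁) * ((2 * k - 1).factorial) ^ m₂ := by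
  have hfs : (2 * k).factorial = 2 * k * (2 * k - 1).factorial := by
    have h2k : 2 * k = (2 * k - 1) + 1 := by omega
    conv_lhs => rw [h2k, Nat.factorial_succ, ← h2k]
  have hcore := aux_core (2 * m₁ + m₂) (2 * k) m₂ (by omega) (by omega)
  have hpos : 0 < (2 * k) ^ m₂ := pow_pos (by omega) _
  refine Nat.le_of_mul_le_mul_right ?_ hpos
  calc (2 * m₁ + m₂).factorial ^ (2 * k) * (2 * k) ^ m₂
      ≤ (2 * k).factorial ^ (2 * m₁ + m₂) := hcore
    _ = (2 * k).factorial ^ (2 * m₁) * (2 * k).factorial ^ m₂ := by rw [pow_add]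
    _ = (2 * k).factorial ^ (2 * m₁) * (2 * k * (2 * k - 1).factorial) ^ m₂ := by
        rw [← hfs]
    _ = (2 * k).factorial ^ (2 * m₁) * (2 * k - 1).factorial ^ m₂ * (2 * k) ^ m₂ := by
        rw [mul_pow]; ring

/-- Lemma 4.2 (factorial inequality) of Roos: for `k ≥ 1` and `m₁ + m₂ ≤ k`,
`(2m₁ + m₂)! ≤ ((2k)!)^{m₁/k} ((2k-1)!)^{m₂/(2k)}`, with equality when `k = 1`. -/
theorem factorial_rpow_inequality (k : ℕ) (hk : 1 ≤ k) (m₁ m₂ : ℕ)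
    (h : m₁ + m₂ ≤ k) :
    ((2 * m₁ + m₂).factorial : ℝ) ≤
      (((2 * k).factorial : ℝ)) ^ ((m₁ : ℝ) / k) *
        (((2 * k - 1).factorial : ℝ)) ^ ((m₂ : ℝ) / (2 * k)) ∧
    (k = 1 →
      ((2 * m₁ + m₂).factorial : ℝ) =
        (((2 * k).factorial : ℝ)) ^ ((m₁ : ℝ) / k) *
          (((2 * k - 1).factorial : ℝ)) ^ ((m₂ : ℝ) / (2 * k))) := by
  have hkR : (0 : ℝ) < (k : ℝ) := by exact_mod_cast hk
  set x : ℝ := ((2 * m₁ + m₂).factorial : ℝ) with hx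
  set A : ℝ := ((2 * k).factorial : ℝ) with hA
  set B : ℝ := ((2 * k - 1).factorial : ℝ) with hB
  have hxpos : 0 < x := by rw [hx]; exact_mod_cast Nat.factorial_pos _
  have hApos : 0 < A := by rw [hA]; exact_mod_cast Nat.factorial_pos _
  have hBpos : 0 < B := by rw [hB]; exact_mod_cast Nat.factorial_pos _
  have hnat := aux_key k m₁ m₂ hk h
  have hreal : x ^ (2 * k) ≤ A ^ (2 * m₁) * B ^ m₂ := by
    rw [hx, hA, hB]; exact_mod_cast hnat
  set t : ℝ := 1 / (2 * (k : ℝ)) with ht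
  have htpos : 0 < t := by positivity
  have hxid : (x ^ (2 * k)) ^ t = x := by
    rw [← Real.rpow_natCast x (2 * k), ← Real.rpow_mul hxpos.le]
    push_cast
    rw [ht]
    field_simp
    simp
  have hstep : (x ^ (2 * k)) ^ t ≤ (A ^ (2 * m₁) * B ^ m₂) ^ t :=
    Real.rpow_le_rpow (by positivity) hreal htpos.le
  have hRHS : (A ^ (2 * m₁) * B ^ m₂) ^ t =
      A ^ ((m₁ : ℝ) / k) * B ^ ((m₂ : ℝ) / (2 * k)) := by
    rw [Real.mul_rpow (by positivity) (by positivity),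
      ← Real.rpow_natCast A (2 * m₁), ← Real.rpow_natCast B m₂,
      ← Real.rpow_mul hApos.le, ← Real.rpow_mul hBpos.le]
    push_cast
    rw [ht]
    congr 1
    · congr 1
      field_simp
    · congr 1
      field_simp
  constructor
  · rw [← hxid]
    rw [hRHS] at hstep
    exact hstep
  · intro hk1
    subst hk1
    have hm1 : m₁ ≤ 1 := by omega
    have hm2 : m₂ ≤ 1 := by omega
    interval_cases m₁ <;> interval_cases m₂ <;>
      first
        | omega
        | norm_num [hx, hA, hB, Nat.factorial, Real.rpow_natCast]
end

section
/- Define g : ℝ → ℝ by g(x) = 2 Σ_{m=2}^∞ (m−1) x^{m−2}/m! (equivalently g(x) = 2e^x(e^{−x} − 1 + x)/x² for x ≠ 0 and g(0) = 1). Then for every x ∈ [0,∞): 1 ≤ g(x) ≤ e^x. Moreover g(2) ≤ 4.195. -/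
open scoped Classical BigOperators

noncomputable section

namespace PaperL1

variable {X : Type*} [AddCommMonoid X]

/-- Convolution of two summable functions on an additive commutative monoid:
`(f ⋆ g) x = Σ_{(y,z) : y + z = x} f y * g z`. -/
def conv (f g : X → ℝ) : X → ℝ :=
  fun x => ∑' p : {p : X × X // p.1 + p.2 = x}, f p.1.1 * g p.1.2

/-- The Dirac delta at a point: the unit of the convolution algebra is `delta 0`. -/
def delta (x₀ : X) : X → ℝ := fun x => if x = x₀ then 1 else 0

/-- Convolution powers, with `f^{*0} = δ₀`. -/
def convPow (f : X → ℝ) : ℕ → (X → ℝ)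
  | 0 => delta 0
  | n + 1 => conv f (convPow f n)

/-- The exponential in the convolution algebra: `exp f = Σ_m f^{*m}/m!`. -/
def convExp (f : X → ℝ) : X → ℝ :=
  fun x => ∑' m : ℕ, ((m.factorial : ℝ))⁻¹ * convPow f m x

/-- Convolution product over a finite (linearly ordered) index set; the empty
product is `δ₀`. -/
def convProd {ι : Type*} [LinearOrder ι] (s : Finset ι) (f : ι → X → ℝ) : X → ℝ :=
  (s.sort (· ≤ ·)).foldr (fun i acc => conv (f i) acc) (delta 0)

/-- The ℓ¹ norm: `‖f‖ = Σ_x |f x|`. -/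
def l1norm (f : X → ℝ) : ℝ := ∑' x, |f x|

/-- A probability mass function: nonnegative values summing to `1`. -/
def IsPmf (f : X → ℝ) : Prop := (∀ x, 0 ≤ f x) ∧ HasSum f 1

/-- The function `g(x) = 2 Σ_{m=2}^∞ (m-1) x^{m-2} / m!`. -/
def gfun (x : ℝ) : ℝ := ∑' m : ℕ, 2 * (m + 1) * x ^ m / ((m + 2).factorial : ℝ)

end PaperL1

open PaperL1

lemma exp_tsum' (x : ℝ) : Real.exp x = ∑' n : ℕ, x ^ n / n.factorial := by
  rw [Real.exp_eq_exp_ℝ, NormedSpace.exp_eq_tsum_div]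

lemma gcoeff_le (m : ℕ) :
    2 * (m + 1 : ℝ) / ((m + 2).factorial : ℝ) ≤ 1 / (m.factorial : ℝ) := by
  have h2 : ((m + 2).factorial : ℝ) = (m + 2) * (m + 1) * m.factorial := by
    rw [show m + 2 = (m + 1) + 1 from rfl, Nat.factorial_succ, Nat.factorial_succ]
    push_cast; ring
  have hm : (0 : ℝ) < m.factorial := by positivity
  rw [div_le_div_iff₀ (by positivity) hm, h2]
  push_cast; nlinarith [hm, sq_nonneg (m : ℝ)]

lemma summable_gterm (x : ℝ) :
    Summable (fun m : ℕ => 2 * (m + 1 : ℝ) * x ^ m / ((m + 2).factorial : ℝ)) := by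
  apply Summable.of_norm_bounded (Real.summable_pow_div_factorial |x|)
  intro m
  rw [Real.norm_eq_abs, abs_div, abs_of_nonneg (by positivity : (0:ℝ) ≤ ((m+2).factorial : ℝ))]
  have : |2 * (m + 1 : ℝ) * x ^ m| = 2 * (m + 1 : ℝ) * |x| ^ m := by
    rw [abs_mul, abs_of_nonneg (by positivity : (0:ℝ) ≤ 2 * (m + 1 : ℝ)), abs_pow]
  rw [this]
  have h := gcoeff_le m
  have hx : (0:ℝ) ≤ |x| ^ m := by positivity
  calc 2 * (m + 1 : ℝ) * |x| ^ m / ((m + 2).factorial : ℝ)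
      = (2 * (m + 1 : ℝ) / ((m + 2).factorial : ℝ)) * |x| ^ m := by ring
    _ ≤ (1 / (m.factorial : ℝ)) * |x| ^ m := by
        exact mul_le_mul_of_nonneg_right h hx
    _ = |x| ^ m / m.factorial := by ring

set_option maxHeartbeats 1000000 in
lemma gfun_two : gfun 2 = Real.exp 2 / 2 + 1 / 2 := by
  have hf : Summable (fun n : ℕ => (2:ℝ) ^ n / n.factorial) :=
    Real.summable_pow_div_factorial 2
  have hS : (∑' n : ℕ, (2:ℝ) ^ n / n.factorial) = Real.exp 2 := (exp_tsum' 2).symm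
  have h1 : Summable (fun m : ℕ => (2:ℝ) ^ (m+1) / (m+1).factorial) :=
    (summable_nat_add_iff 1).2 hf
  have h2 : Summable (fun m : ℕ => (2:ℝ) ^ (m+2) / (m+2).factorial) :=
    (summable_nat_add_iff 2).2 hf
  have h2' : Summable (fun m : ℕ => (2:ℝ) ^ (m+1) / (m+2).factorial) := by
    have := h2.mul_left (1/2)
    refine this.congr (fun m => ?_)
    rw [pow_succ]; ring
  have key : ∀ m : ℕ, 2 * ((m:ℝ) + 1) * 2 ^ m / ((m + 2).factorial : ℝ)
      = (2:ℝ) ^ (m+1) / (m+1).factorial - (2:ℝ) ^ (m+1) / (m+2).factorial := by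
    intro m
    have hfac : ((m + 2).factorial : ℝ) = (m + 2) * (m + 1).factorial := by
      rw [show m + 2 = (m + 1) + 1 from rfl, Nat.factorial_succ]; push_cast; ring
    have hp1 : (0:ℝ) < (m + 1).factorial := by positivity
    have hp2 : (0:ℝ) < ((m + 2).factorial : ℝ) := by positivity
    field_simp
    rw [hfac]; push_cast; ring
  have hg : gfun 2 = (∑' m : ℕ, (2:ℝ) ^ (m+1) / (m+1).factorial)
      - (∑' m : ℕ, (2:ℝ) ^ (m+1) / (m+2).factorial) := by
    rw [gfun, ← Summable.tsum_sub h1 h2']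
    exact tsum_congr key
  have T1 : (∑' m : ℕ, (2:ℝ) ^ (m+1) / (m+1).factorial) = Real.exp 2 - 1 := by
    have := Summable.tsum_eq_zero_add hf
    rw [hS] at this
    simp only [pow_zero, Nat.factorial_zero, Nat.cast_one, div_one] at this
    linarith
  have T2 : (∑' m : ℕ, (2:ℝ) ^ (m+1) / (m+2).factorial) = (Real.exp 2 - 3) / 2 := by
    have e1 := Summable.tsum_eq_zero_add hf
    rw [hS] at e1
    have e2 : (∑' m : ℕ, (2:ℝ) ^ (m+1) / (m+1).factorial)
        = 2 + ∑' m : ℕ, (2:ℝ) ^ (m+2) / (m+2).factorial := by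
      rw [Summable.tsum_eq_zero_add h1]
      norm_num
    have hs : (∑' m : ℕ, (2:ℝ) ^ (m+2) / (m+2).factorial) = Real.exp 2 - 3 := by
      simp only [pow_zero, Nat.factorial_zero, Nat.cast_one, div_one] at e1
      linarith [e1, e2]
    have : (∑' m : ℕ, (2:ℝ) ^ (m+1) / (m+2).factorial)
        = (1/2) * ∑' m : ℕ, (2:ℝ) ^ (m+2) / (m+2).factorial := by
      rw [← tsum_mul_left]
      exact tsum_congr fun m => by rw [pow_succ]; ring
    rw [this, hs]; ring
  rw [hg, T1, T2]; ring

/-- Properties (10) of the auxiliary function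
`g(x) = 2 Σ_{m=2}^∞ (m-1) x^{m-2}/m!` of Roos: `1 ≤ g(x) ≤ e^x` for
`x ∈ [0,∞)`, and `g(2) ≤ 4.195`. -/
theorem gfun_bounds :
    (∀ x : ℝ, 0 ≤ x → 1 ≤ gfun x ∧ gfun x ≤ Real.exp x) ∧ gfun 2 ≤ 4.195 := by
  constructor
  · intro x hx
    constructor
    · have h0 : (2 * ((0:ℕ) + 1 : ℝ) * x ^ (0:ℕ) / (((0:ℕ) + 2).factorial : ℝ)) = 1 := by
        norm_num
      calc (1:ℝ) = 2 * ((0:ℕ) + 1 : ℝ) * x ^ (0:ℕ) / (((0:ℕ) + 2).factorial : ℝ) := h0.symm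
        _ ≤ gfun x := by
            apply Summable.le_tsum (summable_gterm x) 0
            intro m _
            positivity
    · rw [gfun, exp_tsum' x]
      apply Summable.tsum_le_tsum _ (summable_gterm x) (Real.summable_pow_div_factorial x)
      intro m
      have h := gcoeff_le m
      have hxm : (0:ℝ) ≤ x ^ m := by positivity
      calc 2 * ((m:ℝ) + 1) * x ^ m / ((m + 2).factorial : ℝ)
          = (2 * ((m:ℝ) + 1) / ((m + 2).factorial : ℝ)) * x ^ m := by ring
        _ ≤ (1 / (m.factorial : ℝ)) * x ^ m := mul_le_mul_of_nonneg_right h hxm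
        _ = x ^ m / m.factorial := by ring
  · rw [gfun_two]
    have h := Real.exp_one_lt_d9
    have h2 : Real.exp 2 = Real.exp 1 * Real.exp 1 := by
      rw [← Real.exp_add]; norm_num
    have hpos := Real.exp_pos 1
    nlinarith [h, hpos]
end
end
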